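/- Let m be a positive integer and c ≥ 0 a real. For each binary string S of length at most m − 1 let p_S ∈ (0, 1], and define χ over binary strings of length at most m recursively by χ_∅ = 1 and χ_{S0} = χ_{S1} = p_S · χ_S. Suppose q_S ≥ 0 is given for each binary string S of length at most m, satisfying q_{S0} + q_{S1} ≤ (1/p_S) · ( q_S + c · H(p_S) ) for every string S of length at most m − 1. Then Σ_{S : |S| = m} χ_S · q_S ≤ q_∅ + c · Σ_{k=0}^{m−1} Σ_{S : |S| = k} H(p_S). -/

import Mathlib

/-- The binary entropy function, `H(p) = p·log₂(1/p) + (1−p)·log₂(1/(1−p))`,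
with `H 0 = H 1 = 0` under the conventions of `Real.logb`. -/
noncomputable def binEnt (p : ℝ) : ℝ :=
  p * Real.logb 2 (1 / p) + (1 - p) * Real.logb 2 (1 / (1 - p))

lemma aux_term_nonneg {x : ℝ} (hx : 0 ≤ x) (hx1 : x ≤ 1) :
    0 ≤ x * Real.logb 2 (1 / x) := by
  rcases eq_or_lt_of_le hx with h | h
  · simp [← h]
  · have h1 : (1 : ℝ) ≤ 1 / x := by
      rw [le_div_iff₀ h]; linarith
    exact mul_nonneg hx (Real.logb_nonneg one_lt_two h1)

lemma binEnt_nonneg {p : ℝ} (h0 : 0 ≤ p) (h1 : p ≤ 1) : 0 ≤ binEnt p :=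
  add_nonneg (aux_term_nonneg h0 h1) (aux_term_nonneg (by linarith) (by linarith))

lemma ofFn_snoc {k : ℕ} (T : Fin k → Bool) (b : Bool) :
    List.ofFn (Fin.snoc T b) = List.ofFn T ++ [b] := by
  rw [List.ofFn_succ']
  simp [List.concat_eq_append]

/-- **Recursive-decomposition bookkeeping (Lemma on the pattern).**
Binary strings are `List Bool`, with children `S ++ [false]` and `S ++ [true]`; `χ` is the
product of the `p`'s along the ancestors, defined recursively by `χ_∅ = 1` and
`χ_{S0} = χ_{S1} = p_S·χ_S`.  If the nonnegative values `q` satisfy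
`q_{S0} + q_{S1} ≤ (1/p_S)·(q_S + c·H(p_S))` for all strings `S` of length `< m`, then
`Σ_{|S| = m} χ_S·q_S ≤ q_∅ + c·Σ_{k<m} Σ_{|S| = k} H(p_S)`. -/
theorem stmt15 (m : ℕ) (hm : 0 < m) (c : ℝ) (hc : 0 ≤ c)
    (p χ q : List Bool → ℝ)
    (hp : ∀ S : List Bool, S.length < m → p S ∈ Set.Ioc (0 : ℝ) 1)
    (hχnil : χ [] = 1)
    (hχ : ∀ S : List Bool, S.length < m → ∀ b : Bool, χ (S ++ [b]) = p S * χ S)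
    (hq : ∀ S : List Bool, S.length ≤ m → 0 ≤ q S)
    (hrec : ∀ S : List Bool, S.length < m →
      q (S ++ [false]) + q (S ++ [true]) ≤ (1 / p S) * (q S + c * binEnt (p S))) :
    (∑ S : Fin m → Bool, χ (List.ofFn S) * q (List.ofFn S)) ≤
      q [] + c * ∑ k ∈ Finset.range m, ∑ S : Fin k → Bool, binEnt (p (List.ofFn S)) := by
  have hχpos : ∀ k : ℕ, k ≤ m → ∀ T : Fin k → Bool,
      0 < χ (List.ofFn T) ∧ χ (List.ofFn T) ≤ 1 := by
    intro k
    induction k with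
    | zero => intro _ T; simp [hχnil]
    | succ k ih =>
      intro hk T
      have hk' : k < m := by omega
      obtain ⟨h0, h1⟩ := ih hk'.le (fun i => T i.castSucc)
      have hT : (List.ofFn fun i => T i.castSucc).length < m := by simpa using hk'
      have hps := hp _ hT
      have heq : List.ofFn T
          = (List.ofFn fun i => T i.castSucc) ++ [T (Fin.last k)] := by
        rw [List.ofFn_succ']; simp [List.concat_eq_append]
      rw [heq, hχ _ hT _]
      exact ⟨mul_pos hps.1 h0, mul_le_one₀ hps.2 h0.le h1⟩
  have key : ∀ k : ℕ, k ≤ m →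
      (∑ S : Fin k → Bool, χ (List.ofFn S) * q (List.ofFn S)) ≤
        q [] + c * ∑ j ∈ Finset.range k, ∑ S : Fin j → Bool, binEnt (p (List.ofFn S)) := by
    intro k
    induction k with
    | zero => intro _; simp [hχnil]
    | succ k ih =>
      intro hk
      have hkm : k < m := by omega
      have step1 : (∑ S : Fin (k+1) → Bool, χ (List.ofFn S) * q (List.ofFn S))
          = ∑ T : Fin k → Bool, ∑ b : Bool,
              χ (List.ofFn T ++ [b]) * q (List.ofFn T ++ [b]) := by
        rw [← Equiv.sum_comp (Fin.snocEquiv (fun _ => Bool))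
          (fun S => χ (List.ofFn S) * q (List.ofFn S)), Fintype.sum_prod_type]
        rw [Finset.sum_comm]
        simp only [Fin.snocEquiv, Equiv.coe_fn_mk, ofFn_snoc]
      rw [step1]
      have hbound : ∀ T : Fin k → Bool,
          (∑ b : Bool, χ (List.ofFn T ++ [b]) * q (List.ofFn T ++ [b]))
            ≤ χ (List.ofFn T) * q (List.ofFn T) + c * binEnt (p (List.ofFn T)) := by
        intro T
        set L := List.ofFn T with hL
        have hTlen : L.length < m := by simp [hL, hkm]
        obtain ⟨hp0, hp1⟩ := hp L hTlen
        obtain ⟨hχ0, hχ1⟩ := hχpos k hkm.le T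
        have hH : 0 ≤ binEnt (p L) := binEnt_nonneg hp0.le hp1
        have hne : p L ≠ 0 := ne_of_gt hp0
        rw [Fintype.sum_bool, hχ L hTlen true, hχ L hTlen false]
        calc p L * χ L * q (L ++ [true]) + p L * χ L * q (L ++ [false])
            = p L * χ L * (q (L ++ [false]) + q (L ++ [true])) := by ring
          _ ≤ p L * χ L * ((1 / p L) * (q L + c * binEnt (p L))) :=
              mul_le_mul_of_nonneg_left (hrec L hTlen) (mul_pos hp0 hχ0).le
          _ = χ L * q L + χ L * (c * binEnt (p L)) := by field_simp
          _ ≤ χ L * q L + 1 * (c * binEnt (p L)) := by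
              have := mul_le_mul_of_nonneg_right hχ1 (mul_nonneg hc hH)
              linarith
          _ = χ L * q L + c * binEnt (p L) := by ring
      calc (∑ T : Fin k → Bool, ∑ b : Bool,
              χ (List.ofFn T ++ [b]) * q (List.ofFn T ++ [b]))
          ≤ ∑ T : Fin k → Bool,
              (χ (List.ofFn T) * q (List.ofFn T) + c * binEnt (p (List.ofFn T))) :=
            Finset.sum_le_sum fun T _ => hbound T
        _ = (∑ T : Fin k → Bool, χ (List.ofFn T) * q (List.ofFn T))
              + c * ∑ T : Fin k → Bool, binEnt (p (List.ofFn T)) := by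
            rw [Finset.sum_add_distrib, Finset.mul_sum]
        _ ≤ (q [] + c * ∑ j ∈ Finset.range k, ∑ S : Fin j → Bool, binEnt (p (List.ofFn S)))
              + c * ∑ T : Fin k → Bool, binEnt (p (List.ofFn T)) :=
            add_le_add_left (ih hkm.le) _
        _ = q [] + c * ∑ j ∈ Finset.range (k+1), ∑ S : Fin j → Bool,
              binEnt (p (List.ofFn S)) := by
            rw [Finset.sum_range_succ]; ring
  exact key m le_rfl
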